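/- Uniqueness of the Newton–Wigner position among SSC positions that are centres of spin: Let P ∈ ℝ⁴ be future-directed timelike with mc := √(−η(P,P)), let J_{μν} be antisymmetric, and fix τ ∈ ℝ. Suppose χ assigns to every future-directed unit timelike u ∈ ℝ⁴ a point χ(u) ∈ ℝ⁴, continuously in u, such that for every such u: (i) η(u, χ(u)) = −τ; (ii) there exists a future-directed timelike vector f with S_{μν}(χ(u)) f^ν = 0 for all μ (χ(u) lies on an SSC worldline); and (iii) χ(u) − χ^NW(u,τ) ∈ span{u, P} (the centre-of-spin condition). Then χ(u) = χ^NW(u,τ) for all future-directed unit timelike u. -/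

import Mathlib

noncomputable section

open scoped BigOperators

/-- The Minkowski bilinear form on `ℝ⁴`, signature `(-+++)`. -/
def mink (x y : Fin 4 → ℝ) : ℝ := -(x 0 * y 0) + x 1 * y 1 + x 2 * y 2 + x 3 * y 3

/-- Lowering (equivalently raising) an index with `η = diag(-1,1,1,1)`. -/
def low (v : Fin 4 → ℝ) : Fin 4 → ℝ := fun μ => if μ = 0 then -(v μ) else v μ

/-- `v` is future-directed timelike. -/
def FDTimelike (v : Fin 4 → ℝ) : Prop := mink v v < 0 ∧ 0 < v 0

/-- `v` is future-directed unit timelike. -/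
def FDUnitTimelike (v : Fin 4 → ℝ) : Prop := mink v v = -1 ∧ 0 < v 0

/-- `mc := √(−η(P,P))`. -/
def mcOf (P : Fin 4 → ℝ) : ℝ := Real.sqrt (-(mink P P))

/-- The spin tensor `S_{μν}(x) = J_{μν} − x_μ P_ν + x_ν P_μ` about the point `x`. -/
def spinTensor (J : Fin 4 → Fin 4 → ℝ) (P x : Fin 4 → ℝ) : Fin 4 → Fin 4 → ℝ :=
  fun μ ν => J μ ν - low x μ * low P ν + low x ν * low P μ

/-- The spin supplementary condition `S_{μν}(x) f^ν = 0` with respect to `f`. -/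
def SSC (J : Fin 4 → Fin 4 → ℝ) (P x f : Fin 4 → ℝ) : Prop :=
  ∀ μ, ∑ ν, spinTensor J P x μ ν * f ν = 0

/-- Lowered components of the Newton–Wigner position observable. -/
def nwLow (J : Fin 4 → Fin 4 → ℝ) (P u : Fin 4 → ℝ) (τ : ℝ) : Fin 4 → ℝ :=
  fun μ =>
    -(∑ ρ, J μ ρ * (u ρ + P ρ / mcOf P)) / (mcOf P - mink u P)
    + τ * low P μ / (-(mink u P))
    - ((∑ l, ∑ ρ, J l ρ * u l * P ρ) / (mcOf P * (mcOf P - mink u P)))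
        * low P μ / (-(mink u P))

/-- The Newton–Wigner position observable (as a point of `ℝ⁴`). -/
def nw (J : Fin 4 → Fin 4 → ℝ) (P u : Fin 4 → ℝ) (τ : ℝ) : Fin 4 → ℝ :=
  low (nwLow J P u τ)

open scoped Topology

open Finset in
/-- contraction of antisymmetric J with the same vector twice vanishes -/
lemma contract_self (J : Fin 4 → Fin 4 → ℝ) (hJ : ∀ μ ν, J μ ν = -J ν μ) (a : Fin 4 → ℝ) :
    ∑ μ, a μ * ∑ ν, J μ ν * a ν = 0 := by
  have h : ∑ μ, a μ * ∑ ν, J μ ν * a ν = -∑ μ, a μ * ∑ ν, J μ ν * a ν := by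
    calc ∑ μ, a μ * ∑ ν, J μ ν * a ν = ∑ μ, ∑ ν, a μ * (J μ ν * a ν) := by
          simp [Finset.mul_sum]
      _ = ∑ ν, ∑ μ, a μ * (J μ ν * a ν) := Finset.sum_comm
      _ = ∑ ν, a ν * ∑ μ, J ν μ * (-(a μ)) := by
          refine Finset.sum_congr rfl fun ν _ => ?_
          rw [Finset.mul_sum]
          refine Finset.sum_congr rfl fun μ _ => ?_
          rw [hJ μ ν]; ring
      _ = -∑ μ, a μ * ∑ ν, J μ ν * a ν := by
          rw [← Finset.sum_neg_distrib]
          refine Finset.sum_congr rfl fun ν _ => ?_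
          rw [Finset.mul_sum, Finset.mul_sum, ← Finset.sum_neg_distrib]
          exact Finset.sum_congr rfl fun μ _ => by ring
  linarith

/-- contracting `c` (with `Jc = ρ' p`) against `J b` -/
lemma contract_c (J : Fin 4 → Fin 4 → ℝ) (hJ : ∀ μ ν, J μ ν = -J ν μ)
    (c p : Fin 4 → ℝ) (ρ' : ℝ) (hc : ∀ μ, ∑ ν, J μ ν * c ν = ρ' * p μ)
    (b : Fin 4 → ℝ) :
    ∑ μ, c μ * ∑ ν, J μ ν * b ν = -ρ' * ∑ ν, p ν * b ν := by
  calc ∑ μ, c μ * ∑ ν, J μ ν * b ν = ∑ μ, ∑ ν, c μ * (J μ ν * b ν) := by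
        simp [Finset.mul_sum]
    _ = ∑ ν, ∑ μ, c μ * (J μ ν * b ν) := Finset.sum_comm
    _ = ∑ ν, (-(∑ μ, J ν μ * c μ)) * b ν := by
        refine Finset.sum_congr rfl fun ν _ => ?_
        rw [neg_mul, Finset.sum_mul, ← Finset.sum_neg_distrib]
        refine Finset.sum_congr rfl fun μ _ => ?_
        rw [hJ μ ν]; ring
    _ = ∑ ν, (-(ρ' * p ν)) * b ν := by
        refine Finset.sum_congr rfl fun ν _ => by rw [hc ν]
    _ = -ρ' * ∑ ν, p ν * b ν := by
        rw [neg_mul, Finset.mul_sum, ← Finset.sum_neg_distrib]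
        exact Finset.sum_congr rfl fun ν _ => by ring

lemma mink_symm (x y : Fin 4 → ℝ) : mink x y = mink y x := by unfold mink; ring

lemma low_zero : low v 0 = -(v 0) := by simp [low]
lemma low_one : low v 1 = v 1 := by simp [low, show (1:Fin 4) ≠ 0 by decide]
lemma low_two : low v 2 = v 2 := by simp [low, show (2:Fin 4) ≠ 0 by decide]
lemma low_three : low v 3 = v 3 := by simp [low, show (3:Fin 4) ≠ 0 by decide]

lemma sum_mul_low (a b : Fin 4 → ℝ) : ∑ μ, a μ * low b μ = mink a b := by
  rw [Fin.sum_univ_four, low_zero, low_one, low_two, low_three]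
  unfold mink; ring

lemma mink_neg_neg (v w : Fin 4 → ℝ) (hv : FDTimelike v) (hw : FDTimelike w) :
    mink v w < 0 := by
  obtain ⟨hv1, hv2⟩ := hv
  obtain ⟨hw1, hw2⟩ := hw
  unfold mink at *
  nlinarith [sq_nonneg (v 1 * w 2 - v 2 * w 1), sq_nonneg (v 1 * w 3 - v 3 * w 1),
    sq_nonneg (v 2 * w 3 - v 3 * w 2), sq_nonneg (v 1 * w 1 + v 2 * w 2 + v 3 * w 3),
    mul_pos hv2 hw2, sq_nonneg (v 0 * w 0 - (v 1 * w 1 + v 2 * w 2 + v 3 * w 3)),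
    sq_nonneg (v 0 * w 0 + (v 1 * w 1 + v 2 * w 2 + v 3 * w 3))]

lemma spacelike_of_orth (u z : Fin 4 → ℝ) (hu : FDUnitTimelike u)
    (horth : mink u z = 0) (hz : z ≠ 0) : 0 < mink z z := by
  obtain ⟨hu1, hu2⟩ := hu
  by_cases hz123 : z 1 = 0 ∧ z 2 = 0 ∧ z 3 = 0
  · exfalso
    obtain ⟨e1, e2, e3⟩ := hz123
    have hz0 : z 0 = 0 := by
      unfold mink at horth
      rw [e1, e2, e3] at horth
      have : u 0 * z 0 = 0 := by linarith
      rcases mul_eq_zero.mp this with h | h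
      · exact absurd h (ne_of_gt hu2)
      · exact h
    exact hz (funext fun k => by fin_cases k <;> simp only [Pi.zero_apply] <;> assumption)
  · unfold mink at *
    have key : (u 0 * z 0) ^ 2 ≤ (u 1 ^ 2 + u 2 ^ 2 + u 3 ^ 2) * (z 1 ^ 2 + z 2 ^ 2 + z 3 ^ 2) := by
      have : u 0 * z 0 = u 1 * z 1 + u 2 * z 2 + u 3 * z 3 := by linarith
      rw [this]
      nlinarith [sq_nonneg (u 1 * z 2 - u 2 * z 1), sq_nonneg (u 1 * z 3 - u 3 * z 1),
        sq_nonneg (u 2 * z 3 - u 3 * z 2)]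
    have hzpos : 0 < z 1 ^ 2 + z 2 ^ 2 + z 3 ^ 2 := by
      rcases not_and_or.mp hz123 with h | h
      · positivity
      rcases not_and_or.mp h with h' | h'
      · positivity
      · positivity
    nlinarith [sq_nonneg (u 0), mul_pos hu2 hu2]

lemma exists_c (J : Fin 4 → Fin 4 → ℝ) (hJ : ∀ μ ν, J μ ν = -J ν μ)
    (p : Fin 4 → ℝ) (hp : p ≠ 0) :
    ∃ c : Fin 4 → ℝ, ∃ ρ' : ℝ, c ≠ 0 ∧ (∀ μ, ∑ ν, J μ ν * c ν = ρ' * p μ)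
      ∧ (∑ μ, c μ * p μ) = 0 := by
  have h00 : J 0 0 = 0 := by linarith [hJ 0 0]
  have h11 : J 1 1 = 0 := by linarith [hJ 1 1]
  have h22 : J 2 2 = 0 := by linarith [hJ 2 2]
  have h33 : J 3 3 = 0 := by linarith [hJ 3 3]
  have h10 := hJ 1 0
  have h20 := hJ 2 0
  have h21 := hJ 2 1
  have h30 := hJ 3 0
  have h31 := hJ 3 1
  have h32 := hJ 3 2
  set Pf : ℝ := J 0 1 * J 2 3 - J 0 2 * J 1 3 + J 0 3 * J 1 2 with hPfdef
  set K : Fin 4 → Fin 4 → ℝ :=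
    ![![0, J 2 3, -(J 1 3), J 1 2],
      ![-(J 2 3), 0, J 0 3, -(J 0 2)],
      ![J 1 3, -(J 0 3), 0, J 0 1],
      ![-(J 1 2), J 0 2, -(J 0 1), 0]] with hKdef
  have hJK : ∀ μ i, ∑ ν, J μ ν * K ν i = -Pf * (if μ = i then 1 else 0) := by
    intro μ i
    fin_cases μ <;> fin_cases i <;>
      simp [hKdef, Fin.sum_univ_four, h00, h11, h22, h33, h10, h20, h21, h30, h31, h32,
        hPfdef] <;> ring
  by_cases hPf : Pf = 0
  · -- K's columns are in the kernel of J
    have hker : ∀ i μ, ∑ ν, J μ ν * K ν i = 0 := by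
      intro i μ; rw [hJK μ i, hPf]; ring
    by_cases hK : ∀ μ ν, K μ ν = 0
    · -- J = 0; pick any nonzero c ⊥ p
      have z01 : J 0 1 = 0 := by have := hK 2 3; simpa [hKdef] using this
      have z02 : J 0 2 = 0 := by have := hK 3 1; simpa [hKdef] using this
      have z03 : J 0 3 = 0 := by have := hK 1 2; simpa [hKdef] using this
      have z12 : J 1 2 = 0 := by have := hK 0 3; simpa [hKdef] using this
      have z13 : J 1 3 = 0 := by have := hK 2 0; simpa [hKdef] using this
      have z23 : J 2 3 = 0 := by have := hK 0 1; simpa [hKdef] using this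
      refine ⟨![p 1, -(p 0), p 3, -(p 2)], 0, ?_, ?_, ?_⟩
      · intro hzero
        apply hp
        have hp1 : p 1 = 0 := by simpa using congrFun hzero 0
        have hp0 : p 0 = 0 := by simpa using congrFun hzero 1
        have hp3 : p 3 = 0 := by simpa using congrFun hzero 2
        have hp2 : p 2 = 0 := by simpa using congrFun hzero 3
        funext k
        fin_cases k <;> simp only [Pi.zero_apply] <;>
          first | exact hp0 | exact hp1 | exact hp2 | exact hp3
      · intro μ
        fin_cases μ <;>
          simp [Fin.sum_univ_four, h00, h11, h22, h33, h10, h20, h21, h30, h31, h32,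
            z01, z02, z03, z12, z13, z23]
      · simp [Fin.sum_univ_four]; ring
    · push_neg at hK
      obtain ⟨μ0, i0, hKne⟩ := hK
      set c0 : Fin 4 → ℝ := fun ν => K ν i0 with hc0def
      have hc0ne : c0 ≠ 0 := fun h => hKne (by simpa [hc0def] using congrFun h μ0)
      have hc0ker : ∀ μ, ∑ ν, J μ ν * c0 ν = 0 := fun μ => hker i0 μ
      by_cases hc0p : ∑ μ, c0 μ * p μ = 0
      · exact ⟨c0, 0, hc0ne, fun μ => by rw [hc0ker μ]; ring, hc0p⟩
      · have hKanti : ∀ μ ν, K μ ν = -K ν μ := by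
          intro μ ν; fin_cases μ <;> fin_cases ν <;> simp [hKdef]
        set α : ℝ := ∑ μ, c0 μ * p μ with hα
        by_cases hall : ∀ i, (fun ν => α * K ν i - (∑ μ, K μ i * p μ) * c0 ν) = 0
        · exfalso
          have hmul : ∀ ν i, α * K ν i = (∑ μ, K μ i * p μ) * c0 ν := by
            intro ν i
            have := congrFun (hall i) ν
            simp only [Pi.zero_apply] at this
            linarith
          obtain ⟨j, hj⟩ : ∃ j, c0 j ≠ 0 := Function.ne_iff.mp hc0ne
          have hβj : (∑ μ, K μ j * p μ) = 0 := by
            have hKjj : K j j = 0 := by have := hKanti j j; linarith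
            have := hmul j j
            rw [hKjj, mul_zero] at this
            rcases mul_eq_zero.mp this.symm with h | h
            · exact h
            · exact absurd h hj
          have hβall : ∀ ν, (∑ μ, K μ ν * p μ) = 0 := by
            intro ν
            have h1 : α * K j ν = (∑ μ, K μ ν * p μ) * c0 j := hmul j ν
            have h2 : α * K ν j = (∑ μ, K μ j * p μ) * c0 ν := hmul ν j
            rw [hβj, zero_mul] at h2
            have h3 : K j ν = -K ν j := hKanti j ν
            have h4 : α * K j ν = 0 := by
              rw [h3]; rw [mul_neg]
              rw [mul_eq_zero] at h2
              rcases h2 with h | h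
              · exact absurd h hc0p
              · rw [h]; ring
            rw [h4] at h1
            rcases mul_eq_zero.mp h1.symm with h | h
            · exact h
            · exact absurd h hj
          apply hKne
          have := hmul μ0 i0
          rw [hβall i0, zero_mul] at this
          rcases mul_eq_zero.mp this with h | h
          · exact absurd h hc0p
          · exact h
        · push_neg at hall
          obtain ⟨i1, hi1⟩ := hall
          refine ⟨_, 0, hi1, ?_, ?_⟩
          · intro μ
            have e1 : ∑ ν, J μ ν * (α * K ν i1 - (∑ l, K l i1 * p l) * c0 ν)
                = α * (∑ ν, J μ ν * K ν i1) - (∑ l, K l i1 * p l) * (∑ ν, J μ ν * c0 ν) := by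
              rw [Finset.mul_sum, Finset.mul_sum, ← Finset.sum_sub_distrib]
              exact Finset.sum_congr rfl fun ν _ => by ring
            rw [e1, hker i1 μ, hc0ker μ]; ring
          · have e1 : ∑ μ, (α * K μ i1 - (∑ l, K l i1 * p l) * c0 μ) * p μ
                = α * (∑ μ, K μ i1 * p μ) - (∑ l, K l i1 * p l) * (∑ μ, c0 μ * p μ) := by
              rw [Finset.mul_sum, Finset.mul_sum, ← Finset.sum_sub_distrib]
              exact Finset.sum_congr rfl fun μ _ => by ring
            rw [e1, ← hα]; ring
  · -- Pf ≠ 0 : J is invertible with inverse -(1/Pf) K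
    obtain ⟨c, hcapp⟩ : ∃ c : Fin 4 → ℝ, ∀ ν, c ν = ∑ i, (-(1/Pf) * K ν i) * p i :=
      ⟨_, fun ν => rfl⟩
    have hJc : ∀ μ, ∑ ν, J μ ν * c ν = p μ := by
      intro μ
      have step1 : ∑ ν, J μ ν * c ν = ∑ ν, ∑ i, (-(1/Pf) * p i) * (J μ ν * K ν i) := by
        refine Finset.sum_congr rfl fun ν _ => ?_
        rw [hcapp ν, Finset.mul_sum]
        exact Finset.sum_congr rfl fun i _ => by ring
      rw [step1, Finset.sum_comm]
      have step2 : ∀ i, ∑ ν, (-(1/Pf) * p i) * (J μ ν * K ν i)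
          = (-(1/Pf) * p i) * (-Pf * (if μ = i then 1 else 0)) := by
        intro i; rw [← hJK μ i, Finset.mul_sum]
      rw [Finset.sum_congr rfl fun i _ => step2 i, Fin.sum_univ_four]
      fin_cases μ <;> simp <;> field_simp
    have hcne : c ≠ 0 := by
      intro h
      apply hp
      funext μ
      have := hJc μ
      rw [h] at this
      simpa using this.symm
    refine ⟨c, 1, hcne, fun μ => by rw [hJc μ]; ring, ?_⟩
    calc ∑ μ, c μ * p μ = ∑ μ, c μ * ∑ ν, J μ ν * c ν :=
          Finset.sum_congr rfl fun μ _ => by rw [hJc μ]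
      _ = 0 := contract_self J hJ c

lemma sum_low_mul (a b : Fin 4 → ℝ) : ∑ μ, low a μ * b μ = mink a b := by
  rw [Fin.sum_univ_four, low_zero, low_one, low_two, low_three]; unfold mink; ring

lemma low_low (v : Fin 4 → ℝ) : low (low v) = v := by
  funext μ
  unfold low
  by_cases h : μ = 0 <;> simp [h]

/-- inner expansion of the J-contraction appearing in nwLow -/
lemma inner_split (J : Fin 4 → Fin 4 → ℝ) (u P : Fin 4 → ℝ) (m : ℝ) (μ : Fin 4) :
    ∑ ρ, J μ ρ * (u ρ + P ρ / m)
      = (∑ ρ, J μ ρ * u ρ) + (1/m) * ∑ ρ, J μ ρ * P ρ := by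
  rw [Finset.mul_sum, ← Finset.sum_add_distrib]
  exact Finset.sum_congr rfl fun ρ _ => by ring

lemma sum_u_JP (J : Fin 4 → Fin 4 → ℝ) (u P : Fin 4 → ℝ) :
    ∑ μ, u μ * ∑ ρ, J μ ρ * P ρ = ∑ l, ∑ ρ, J l ρ * u l * P ρ := by
  refine Finset.sum_congr rfl fun l _ => ?_
  rw [Finset.mul_sum]
  exact Finset.sum_congr rfl fun ρ _ => by ring

/-- Generic contraction of a vector `a` against `nwLow`. -/
lemma sum_nwLow (J : Fin 4 → Fin 4 → ℝ) (P u : Fin 4 → ℝ) (τ : ℝ) (a : Fin 4 → ℝ) :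
    ∑ μ, a μ * nwLow J P u τ μ
      = -(1/(mcOf P - mink u P)) * (∑ μ, a μ * ∑ ρ, J μ ρ * (u ρ + P ρ / mcOf P))
        + (τ/(-(mink u P))) * mink a P
        - ((∑ l, ∑ ρ, J l ρ * u l * P ρ) / (mcOf P * (mcOf P - mink u P)) / (-(mink u P)))
            * mink a P := by
  rw [← sum_mul_low a P]
  have e : ∀ μ, a μ * nwLow J P u τ μ
      = -(1/(mcOf P - mink u P)) * (a μ * ∑ ρ, J μ ρ * (u ρ + P ρ / mcOf P))
        + (τ/(-(mink u P))) * (a μ * low P μ)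
        - ((∑ l, ∑ ρ, J l ρ * u l * P ρ) / (mcOf P * (mcOf P - mink u P)) / (-(mink u P)))
            * (a μ * low P μ) := by
    intro μ; unfold nwLow; ring
  rw [Finset.sum_congr rfl fun μ _ => e μ]
  rw [Finset.sum_sub_distrib, Finset.sum_add_distrib, ← Finset.mul_sum, ← Finset.mul_sum,
    ← Finset.mul_sum]

/-- `η(u, χ^NW(u)) = -τ`. -/
lemma plane_nw (J : Fin 4 → Fin 4 → ℝ) (hJ : ∀ μ ν, J μ ν = -J ν μ)
    (P u : Fin 4 → ℝ) (τ : ℝ) (hm : mcOf P ≠ 0) (hw : mink u P ≠ 0)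
    (hden : mcOf P - mink u P ≠ 0) :
    mink u (nw J P u τ) = -τ := by
  have hlow : mink u (nw J P u τ) = ∑ μ, u μ * nwLow J P u τ μ := by
    unfold nw
    rw [← sum_mul_low u (low (nwLow J P u τ)), low_low]
  rw [hlow, sum_nwLow]
  have hA : ∑ μ, u μ * ∑ ρ, J μ ρ * (u ρ + P ρ / mcOf P)
      = (1/mcOf P) * ∑ l, ∑ ρ, J l ρ * u l * P ρ := by
    rw [Finset.sum_congr rfl fun μ _ => by rw [inner_split J u P (mcOf P) μ]]
    have e : ∀ μ, u μ * ((∑ ρ, J μ ρ * u ρ) + (1/mcOf P) * ∑ ρ, J μ ρ * P ρ)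
        = u μ * (∑ ρ, J μ ρ * u ρ) + (1/mcOf P) * (u μ * ∑ ρ, J μ ρ * P ρ) := by
      intro μ; ring
    rw [Finset.sum_congr rfl fun μ _ => e μ, Finset.sum_add_distrib,
      contract_self J hJ u, ← Finset.mul_sum, sum_u_JP]
    ring
  rw [hA]
  have hinv : (mink u P)⁻¹ * mink u P = 1 := inv_mul_cancel₀ hw
  field_simp
  ring

/-- Contraction of the special covector `c` against `nwLow` gives `-ρ'`. -/
lemma c_nw (J : Fin 4 → Fin 4 → ℝ) (hJ : ∀ μ ν, J μ ν = -J ν μ)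
    (P u c : Fin 4 → ℝ) (τ ρ' : ℝ)
    (hcJ : ∀ μ, ∑ ν, J μ ν * c ν = ρ' * low P μ)
    (hcp : ∑ μ, c μ * low P μ = 0)
    (hm : mcOf P ≠ 0) (hw : mink u P ≠ 0) (hden : mcOf P - mink u P ≠ 0)
    (hmc2 : mcOf P * mcOf P = -(mink P P)) :
    ∑ μ, c μ * nwLow J P u τ μ = -ρ' := by
  rw [sum_nwLow]
  have hcP : mink c P = 0 := by rw [← sum_mul_low c P]; exact hcp
  have hA : ∑ μ, c μ * ∑ ρ, J μ ρ * (u ρ + P ρ / mcOf P)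
      = -ρ' * (mink u P - mcOf P) := by
    have := contract_c J hJ c (low P) ρ' hcJ (fun ρ => u ρ + P ρ / mcOf P)
    rw [this]
    have e : ∑ ν, low P ν * (u ν + P ν / mcOf P)
        = (∑ ν, low P ν * u ν) + (1/mcOf P) * ∑ ν, low P ν * P ν := by
      rw [Finset.mul_sum, ← Finset.sum_add_distrib]
      exact Finset.sum_congr rfl fun ν _ => by ring
    rw [e, sum_low_mul, sum_low_mul, mink_symm P u]
    have : mink P P = -(mcOf P * mcOf P) := by linarith
    rw [this]
    field_simp
    ring
  rw [hA, hcP]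
  field_simp
  ring

/-- Contraction of `c` against any SSC position gives `-ρ'`. -/
lemma c_ssc (J : Fin 4 → Fin 4 → ℝ) (hJ : ∀ μ ν, J μ ν = -J ν μ)
    (P x f c : Fin 4 → ℝ) (ρ' : ℝ)
    (hssc : SSC J P x f) (hPf : mink P f ≠ 0)
    (hcJ : ∀ μ, ∑ ν, J μ ν * c ν = ρ' * low P μ)
    (hcp : ∑ μ, c μ * low P μ = 0) :
    ∑ μ, c μ * low x μ = -ρ' := by
  have h0 : ∑ μ, c μ * ∑ ν, spinTensor J P x μ ν * f ν = 0 := by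
    rw [Finset.sum_congr rfl fun μ _ => by rw [hssc μ, mul_zero]]
    simp
  have hexp : ∀ μ, ∑ ν, spinTensor J P x μ ν * f ν
      = (∑ ν, J μ ν * f ν) - low x μ * (∑ ν, low P ν * f ν)
        + low P μ * (∑ ν, low x ν * f ν) := by
    intro μ
    unfold spinTensor
    rw [Finset.mul_sum, Finset.mul_sum, ← Finset.sum_sub_distrib, ← Finset.sum_add_distrib]
    exact Finset.sum_congr rfl fun ν _ => by ring
  rw [Finset.sum_congr rfl fun μ _ => by rw [hexp μ]] at h0
  have hsplit : ∑ μ, c μ * ((∑ ν, J μ ν * f ν) - low x μ * (∑ ν, low P ν * f ν)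
        + low P μ * (∑ ν, low x ν * f ν))
      = (∑ μ, c μ * ∑ ν, J μ ν * f ν)
        - (∑ ν, low P ν * f ν) * (∑ μ, c μ * low x μ)
        + (∑ ν, low x ν * f ν) * (∑ μ, c μ * low P μ) := by
    rw [Finset.mul_sum, Finset.mul_sum, ← Finset.sum_sub_distrib, ← Finset.sum_add_distrib]
    exact Finset.sum_congr rfl fun μ _ => by ring
  rw [hsplit] at h0
  rw [contract_c J hJ c (low P) ρ' hcJ f, hcp, sum_low_mul] at h0
  have : mink P f * (∑ μ, c μ * low x μ + ρ') = 0 := by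
    rw [sum_low_mul] at h0
    ring_nf
    ring_nf at h0
    linarith
  rcases mul_eq_zero.mp this with h | h
  · exact absurd h hPf
  · linarith

lemma mink_comb (x y z : Fin 4 → ℝ) (a b : ℝ) :
    mink x (a • y + b • z) = a * mink x y + b * mink x z := by
  unfold mink; simp only [Pi.add_apply, Pi.smul_apply, smul_eq_mul]; ring

lemma mink_bilin (a b : ℝ) (x y : Fin 4 → ℝ) :
    mink (a • x + b • y) (a • x + b • y)
      = a^2 * mink x x + 2*a*b * mink x y + b^2 * mink y y := by
  unfold mink; simp only [Pi.add_apply, Pi.smul_apply, smul_eq_mul]; ring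

lemma mink_sub_right (x y z : Fin 4 → ℝ) : mink x (y - z) = mink x y - mink x z := by
  unfold mink; simp only [Pi.sub_apply]; ring

lemma mink_low (a b : Fin 4 → ℝ) : mink a (low b) = ∑ μ, a μ * b μ := by
  have l0 : low b 0 = -(b 0) := by simp [low]
  have l1 : low b 1 = b 1 := by simp [low, show (1:Fin 4) ≠ 0 by decide]
  have l2 : low b 2 = b 2 := by simp [low, show (2:Fin 4) ≠ 0 by decide]
  have l3 : low b 3 = b 3 := by simp [low, show (3:Fin 4) ≠ 0 by decide]
  rw [Fin.sum_univ_four]; unfold mink; rw [l0, l1, l2, l3]; ring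

lemma low_sub_app (x y : Fin 4 → ℝ) (μ : Fin 4) : low (x - y) μ = low x μ - low y μ := by
  by_cases h : μ = 0 <;> simp [low, h, Pi.sub_apply] <;> ring

lemma low_comb_app (y z : Fin 4 → ℝ) (a b : ℝ) (μ : Fin 4) :
    low (a • y + b • z) μ = a * low y μ + b * low z μ := by
  by_cases h : μ = 0 <;>
    simp [low, h, Pi.add_apply, Pi.smul_apply, smul_eq_mul] <;> ring

/-- continuity of the Newton–Wigner map in `u`. -/
lemma nw_contAt (J : Fin 4 → Fin 4 → ℝ) (P : Fin 4 → ℝ) (τ : ℝ) (u0 : Fin 4 → ℝ)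
    (hm : mcOf P ≠ 0) (hw : mink u0 P ≠ 0) (hden : mcOf P - mink u0 P ≠ 0) :
    ContinuousAt (fun v => nw J P v τ) u0 := by
  have hBc : Continuous (fun v : Fin 4 → ℝ => mcOf P - mink v P) := by
    unfold mink; fun_prop
  have hDc : Continuous (fun v : Fin 4 → ℝ => -(mink v P)) := by
    unfold mink; fun_prop
  have hDne : -(mink u0 P) ≠ 0 := neg_ne_zero.mpr hw
  apply continuousAt_pi.mpr
  intro μ
  have hAc : Continuous (fun v : Fin 4 → ℝ => -(∑ ρ, J μ ρ * (v ρ + P ρ / mcOf P))) := by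
    simp only [Fin.sum_univ_four]
    fun_prop
  have hEc : Continuous (fun v : Fin 4 → ℝ => ∑ l, ∑ ρ, J l ρ * v l * P ρ) := by
    simp only [Fin.sum_univ_four]
    fun_prop
  have hnwLow : ContinuousAt (fun v => nwLow J P v τ μ) u0 := by
    unfold nwLow
    apply ContinuousAt.sub
    apply ContinuousAt.add
    · exact ContinuousAt.div hAc.continuousAt hBc.continuousAt hden
    · exact ContinuousAt.div continuousAt_const hDc.continuousAt hDne
    · apply ContinuousAt.div _ hDc.continuousAt hDne
      apply ContinuousAt.mul _ continuousAt_const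
      exact ContinuousAt.div hEc.continuousAt
        (Continuous.continuousAt (by fun_prop)) (mul_ne_zero hm hden)
  show ContinuousAt (fun v => low (nwLow J P v τ) μ) u0
  by_cases h : μ = 0
  · have : (fun v => low (nwLow J P v τ) μ) = fun v => -(nwLow J P v τ μ) := by
      funext v; simp [low, h]
    rw [this]; exact hnwLow.neg
  · have : (fun v => low (nwLow J P v τ) μ) = fun v => nwLow J P v τ μ := by
      funext v; simp [low, h]
    rw [this]; exact hnwLow

/-- **Uniqueness of the Newton–Wigner position among SSC positions that are centres of spin.**
If `χ` assigns continuously to each future-directed unit timelike `u` a point `χ(u)` on the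
hyperplane `{x : η(u,x) = −τ}` which lies on some SSC worldline and for which
`χ(u) − χ^NW(u,τ) ∈ span{u, P}`, then `χ(u) = χ^NW(u,τ)` for all such `u`. -/
theorem newtonWigner_unique_centre_of_spin
    (P : Fin 4 → ℝ) (hP : FDTimelike P)
    (J : Fin 4 → Fin 4 → ℝ) (hJ : ∀ μ ν, J μ ν = -J ν μ) (τ : ℝ)
    (χ : (Fin 4 → ℝ) → (Fin 4 → ℝ))
    (hcont : ContinuousOn χ {u : Fin 4 → ℝ | FDUnitTimelike u})
    (hplane : ∀ u, FDUnitTimelike u → mink u (χ u) = -τ)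
    (hssc : ∀ u, FDUnitTimelike u → ∃ f, FDTimelike f ∧ SSC J P (χ u) f)
    (hcos : ∀ u, FDUnitTimelike u → χ u - nw J P u τ ∈ Submodule.span ℝ ({u, P} : Set (Fin 4 → ℝ))) :
    ∀ u, FDUnitTimelike u → χ u = nw J P u τ := by
  have hPP : mink P P < 0 := hP.1
  have hmcpos : 0 < mcOf P := Real.sqrt_pos.mpr (by linarith)
  have hmc2 : mcOf P * mcOf P = -(mink P P) := Real.mul_self_sqrt (by linarith)
  have hm : mcOf P ≠ 0 := ne_of_gt hmcpos
  have hlowPne : low P ≠ 0 := by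
    intro h
    have h0 := congrFun h 0
    rw [low_zero] at h0
    simp only [Pi.zero_apply] at h0
    have : P 0 = 0 := by linarith
    exact absurd this (ne_of_gt hP.2)
  obtain ⟨c, ρ', hcne, hcJ, hcp'⟩ := exists_c J hJ (low P) hlowPne
  have hcp : ∑ μ, c μ * low P μ = 0 := hcp'
  have hFDT : ∀ u : Fin 4 → ℝ, FDUnitTimelike u → FDTimelike u := fun u hu =>
    ⟨by rw [hu.1]; norm_num, hu.2⟩
  have hwneg : ∀ u, FDUnitTimelike u → mink u P < 0 := fun u hu =>
    mink_neg_neg u P (hFDT u hu) hP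
  -- pointwise key step: if χ(u) ≠ χ^NW(u) then u annihilates the covector c
  have keyA : ∀ u, FDUnitTimelike u → χ u ≠ nw J P u τ → mink c u = 0 := by
    intro u hu hne
    have hw : mink u P < 0 := hwneg u hu
    have hden : mcOf P - mink u P ≠ 0 := ne_of_gt (by linarith)
    obtain ⟨f, hfFD, hfSSC⟩ := hssc u hu
    have hPfneg : mink P f < 0 := mink_neg_neg P f hP hfFD
    have hxc : ∑ μ, c μ * low (χ u) μ = -ρ' :=
      c_ssc J hJ P (χ u) f c ρ' hfSSC (ne_of_lt hPfneg) hcJ hcp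
    have hyc : ∑ μ, c μ * nwLow J P u τ μ = -ρ' :=
      c_nw J hJ P u c τ ρ' hcJ hcp hm (ne_of_lt hw) hden hmc2
    obtain ⟨a, b, hab⟩ := Submodule.mem_span_pair.mp (hcos u hu)
    have hplnw : mink u (nw J P u τ) = -τ := plane_nw J hJ P u τ hm (ne_of_lt hw) hden
    have h1 : mink u (χ u - nw J P u τ) = 0 := by
      rw [mink_sub_right, hplane u hu, hplnw]; ring
    rw [← hab, mink_comb, hu.1] at h1
    have hb : b ≠ 0 := by
      intro hb0
      have ha0 : a = 0 := by rw [hb0] at h1; linarith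
      apply hne
      have hzero : χ u - nw J P u τ = 0 := by rw [← hab, ha0, hb0]; simp
      exact sub_eq_zero.mp hzero
    have ha : a = b * mink u P := by linarith
    have hlownw : low (nw J P u τ) = nwLow J P u τ := by unfold nw; rw [low_low]
    have hsum : ∑ μ, c μ * low (χ u - nw J P u τ) μ = 0 := by
      have e : ∀ μ, c μ * low (χ u - nw J P u τ) μ
          = c μ * low (χ u) μ - c μ * low (nw J P u τ) μ := by
        intro μ; rw [low_sub_app]; ring
      rw [Finset.sum_congr rfl fun μ _ => e μ, Finset.sum_sub_distrib, hxc]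
      rw [show ∑ μ, c μ * low (nw J P u τ) μ = ∑ μ, c μ * nwLow J P u τ μ from
        Finset.sum_congr rfl fun μ _ => by rw [hlownw], hyc]
      ring
    have hsum2 : ∑ μ, c μ * low (χ u - nw J P u τ) μ = a * mink c u := by
      rw [← hab]
      have e : ∀ μ, c μ * low (a • u + b • P) μ
          = a * (c μ * low u μ) + b * (c μ * low P μ) := by
        intro μ; rw [low_comb_app]; ring
      rw [Finset.sum_congr rfl fun μ _ => e μ, Finset.sum_add_distrib,
        ← Finset.mul_sum, ← Finset.mul_sum, hcp, sum_mul_low]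
      ring
    rw [hsum] at hsum2
    have hane : a ≠ 0 := by rw [ha]; exact mul_ne_zero hb (ne_of_lt hw)
    rcases mul_eq_zero.mp hsum2.symm with h | h
    · exact absurd h hane
    · exact h
  -- now the continuity argument
  intro u0 hu0
  rcases ne_or_eq (mink c u0) 0 with hcu | hcu
  · by_contra hne; exact hcu (keyA u0 hu0 hne)
  · have hw0 : mink u0 P < 0 := hwneg u0 hu0
    have hden0 : mcOf P - mink u0 P ≠ 0 := ne_of_gt (by linarith)
    set z0 : Fin 4 → ℝ := low c with hz0def
    have hcz0 : 0 < mink c z0 := by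
      rw [hz0def, mink_low, Fin.sum_univ_four]
      rcases lt_or_ge 0 (c 0 * c 0 + c 1 * c 1 + c 2 * c 2 + c 3 * c 3) with h | h
      · exact h
      · exfalso
        apply hcne
        have e0 : c 0 = 0 := mul_self_eq_zero.mp (by
          nlinarith [mul_self_nonneg (c 0), mul_self_nonneg (c 1),
            mul_self_nonneg (c 2), mul_self_nonneg (c 3)])
        have e1 : c 1 = 0 := mul_self_eq_zero.mp (by
          nlinarith [mul_self_nonneg (c 0), mul_self_nonneg (c 1),
            mul_self_nonneg (c 2), mul_self_nonneg (c 3)])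
        have e2 : c 2 = 0 := mul_self_eq_zero.mp (by
          nlinarith [mul_self_nonneg (c 0), mul_self_nonneg (c 1),
            mul_self_nonneg (c 2), mul_self_nonneg (c 3)])
        have e3 : c 3 = 0 := mul_self_eq_zero.mp (by
          nlinarith [mul_self_nonneg (c 0), mul_self_nonneg (c 1),
            mul_self_nonneg (c 2), mul_self_nonneg (c 3)])
        funext k
        fin_cases k <;> simp only [Pi.zero_apply] <;> assumption
    set z1 : Fin 4 → ℝ := (1:ℝ) • z0 + (mink u0 z0) • u0 with hz1def
    have horth : mink u0 z1 = 0 := by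
      rw [hz1def, mink_comb, hu0.1]; ring
    have hcz1 : 0 < mink c z1 := by
      rw [hz1def, mink_comb, hcu]
      linarith [hcz0]
    have hz1ne : z1 ≠ 0 := by
      intro h
      rw [h] at hcz1
      unfold mink at hcz1
      simp at hcz1
    have hsp : 0 < mink z1 z1 := spacelike_of_orth u0 z1 hu0 horth hz1ne
    set s : ℝ := Real.sqrt (mink z1 z1) with hsdef
    have hspos : 0 < s := Real.sqrt_pos.mpr hsp
    have hsne : s ≠ 0 := ne_of_gt hspos
    have hs2 : s * s = mink z1 z1 := Real.mul_self_sqrt (le_of_lt hsp)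
    set uline : ℝ → (Fin 4 → ℝ) :=
      fun t => Real.cosh t • u0 + (Real.sinh t * s⁻¹) • z1 with hulinedef
    have huline0 : uline 0 = u0 := by
      rw [hulinedef]; simp
    have hulinemink : ∀ t, mink (uline t) (uline t) = -1 := by
      intro t
      rw [hulinedef]
      simp only []
      rw [mink_bilin, hu0.1, horth, ← hs2]
      linear_combination (-1 : ℝ) * Real.cosh_sq_sub_sinh_sq t
        + (Real.sinh t ^ 2 * (s⁻¹ * s + 1)) * inv_mul_cancel₀ hsne
    have hulinec : ∀ t, mink c (uline t)
        = (Real.sinh t * s⁻¹) * mink c z1 := by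
      intro t
      rw [hulinedef]
      simp only []
      rw [mink_comb, hcu]
      ring
    have hc0 : Continuous fun t => uline t 0 := by
      rw [hulinedef]
      simp only [Pi.add_apply, Pi.smul_apply, smul_eq_mul]
      fun_prop
    have hev : ∀ᶠ t in 𝓝 (0 : ℝ), 0 < uline t 0 := by
      have hval : 0 < uline 0 0 := by rw [huline0]; exact hu0.2
      exact hc0.continuousAt.eventually (eventually_gt_nhds hval)
    have hev2 : ∀ᶠ t in 𝓝[≠] (0 : ℝ),
        FDUnitTimelike (uline t) ∧ mink c (uline t) ≠ 0 := by
      filter_upwards [hev.filter_mono nhdsWithin_le_nhds, self_mem_nhdsWithin] with t ht htne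
      refine ⟨⟨hulinemink t, ht⟩, ?_⟩
      rw [hulinec t]
      have hsh : Real.sinh t ≠ 0 := fun h => htne (Real.sinh_eq_zero.mp h)
      exact mul_ne_zero (mul_ne_zero hsh (inv_ne_zero hsne)) (ne_of_gt hcz1)
    have hulinecont : Continuous uline := by
      rw [hulinedef]
      exact (Real.continuous_cosh.smul continuous_const).add
        ((Real.continuous_sinh.mul continuous_const).smul continuous_const)
    have htend0 : Filter.Tendsto uline (𝓝[≠] (0 : ℝ)) (𝓝 u0) := by
      have h := hulinecont.continuousAt (x := (0:ℝ))
      rw [ContinuousAt, huline0] at h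
      exact h.mono_left nhdsWithin_le_nhds
    have htendH : Filter.Tendsto uline (𝓝[≠] (0 : ℝ))
        (𝓝[{u : Fin 4 → ℝ | FDUnitTimelike u}] u0) :=
      tendsto_nhdsWithin_of_tendsto_nhds_of_eventually_within _ htend0
        (hev2.mono fun t ht => ht.1)
    have h1 : Filter.Tendsto (fun t => χ (uline t)) (𝓝[≠] (0 : ℝ)) (𝓝 (χ u0)) :=
      (hcont u0 hu0).tendsto.comp htendH
    have h2 : Filter.Tendsto (fun t => nw J P (uline t) τ) (𝓝[≠] (0 : ℝ))
        (𝓝 (nw J P u0 τ)) :=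
      (nw_contAt J P τ u0 hm (ne_of_lt hw0) hden0).tendsto.comp htend0
    have heq : ∀ᶠ t in 𝓝[≠] (0 : ℝ), χ (uline t) = nw J P (uline t) τ := by
      filter_upwards [hev2] with t ht
      by_contra hne
      exact ht.2 (keyA (uline t) ht.1 hne)
    have h1' : Filter.Tendsto (fun t => nw J P (uline t) τ) (𝓝[≠] (0 : ℝ))
        (𝓝 (χ u0)) := h1.congr' heq
    exact tendsto_nhds_unique h1' h2
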